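/- Let T be a finite set of size N, let O₁, …, O_B be nonempty pairwise disjoint sets with T = O₁ ∪ … ∪ O_B, set S_s := O_s ∪ O_{s+1} ∪ … ∪ O_B, and let w : T → [0, ∞). Then ∑_{s=1}^{B} (|O_s|/|S_s|) · ∑_{t=1}^{s} ∑_{j ∈ O_t} w_j ≤ min( ∑_{k=1}^{N} 1/k , B ) · ∑_{j ∈ T} w_j. In particular, ∑_{s=1}^{B} |O_s|/|S_s| ≤ ∑_{k=1}^{N} 1/k. -/

import Mathlib

/-!
STATEMENT 6 (combinatorial inequality from the sample-complexity proof of Theorem 3.1):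
`T` a finite set of size `N`, `O 1, …, O B` nonempty pairwise disjoint with union `T`,
`S s = O s ∪ ⋯ ∪ O B`, and `w : T → [0,∞)`.  Then
`∑_{s=1}^B (|O s|/|S s|) ∑_{t=1}^s ∑_{j ∈ O t} w j ≤ min(∑_{k=1}^N 1/k, B) ∑_{j ∈ T} w j`,
and in particular `∑_{s=1}^B |O s|/|S s| ≤ ∑_{k=1}^N 1/k`.
-/

lemma shift_sum (f : ℕ → ℝ) (a B : ℕ) :
    ∑ s ∈ Finset.Icc (a+1) (B+1), f s = ∑ s ∈ Finset.Icc a B, f (s+1) := by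
  rw [← Finset.map_add_right_Icc a B 1, Finset.sum_map]
  rfl

lemma shift_sum_nat (f : ℕ → ℕ) (a B : ℕ) :
    ∑ s ∈ Finset.Icc (a+1) (B+1), f s = ∑ s ∈ Finset.Icc a B, f (s+1) := by
  rw [← Finset.map_add_right_Icc a B 1, Finset.sum_map]
  rfl

lemma harm : ∀ (B : ℕ) (n : ℕ → ℕ), (∀ s ∈ Finset.Icc 1 B, 1 ≤ n s) →
    ∑ s ∈ Finset.Icc 1 B, (n s : ℝ) / ((∑ t ∈ Finset.Icc s B, n t : ℕ) : ℝ) ≤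
    ∑ k ∈ Finset.Icc 1 (∑ t ∈ Finset.Icc 1 B, n t), (1:ℝ)/k := by
  intro B
  induction B with
  | zero => intro n _; simp
  | succ B ih =>
    intro n hn
    have h1 : Finset.Icc 1 (B+1) = insert 1 (Finset.Icc 2 (B+1)) := by
      ext x; simp [Finset.mem_Icc]; omega
    have hnot : (1:ℕ) ∉ Finset.Icc 2 (B+1) := by simp
    set m : ℕ := ∑ t ∈ Finset.Icc 1 B, n (t+1) with hm
    have htot : ∑ t ∈ Finset.Icc 1 (B+1), n t = n 1 + m := by
      rw [h1, Finset.sum_insert hnot, shift_sum_nat]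
    have hIH := ih (fun t => n (t+1)) (fun s hs => by
      apply hn; simp only [Finset.mem_Icc] at hs ⊢; omega)
    have hshift2 : ∑ s ∈ Finset.Icc 2 (B+1), (n s : ℝ) / ((∑ t ∈ Finset.Icc s (B+1), n t : ℕ) : ℝ)
        = ∑ s ∈ Finset.Icc 1 B, ((n (s+1) : ℝ)) / ((∑ t ∈ Finset.Icc s B, n (t+1) : ℕ) : ℝ) := by
      rw [shift_sum (fun s => (n s : ℝ) / ((∑ t ∈ Finset.Icc s (B+1), n t : ℕ) : ℝ)) 1 B]
      apply Finset.sum_congr rfl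
      intro s hs
      rw [shift_sum_nat n s B]
    have hn1 : 1 ≤ n 1 := hn 1 (by simp)
    have hsplit : ∑ k ∈ Finset.Icc 1 (n 1 + m), (1:ℝ)/k
        = ∑ k ∈ Finset.Icc 1 m, (1:ℝ)/k + ∑ k ∈ Finset.Ioc m (m + n 1), (1:ℝ)/k := by
      have e : ∀ x : ℕ, Finset.Icc 1 x = Finset.Ioc 0 x := fun x => by
        rw [← Finset.Icc_add_one_left_eq_Ioc]; rfl
      rw [e, e, Nat.add_comm (n 1) m]
      exact (Finset.sum_Ioc_consecutive _ (Nat.zero_le m) (Nat.le_add_right m (n 1))).symm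
    have hkey : (n 1 : ℝ) / ((n 1 + m : ℕ) : ℝ) ≤ ∑ k ∈ Finset.Ioc m (m + n 1), (1:ℝ)/k := by
      have hcard : (Finset.Ioc m (m + n 1)).card = n 1 := by
        rw [Nat.card_Ioc]; omega
      have := Finset.card_nsmul_le_sum (Finset.Ioc m (m + n 1))
        (fun k => (1:ℝ)/k) (1/((n 1 + m : ℕ) : ℝ)) ?_
      · rw [hcard, nsmul_eq_mul] at this
        calc (n 1 : ℝ) / ((n 1 + m : ℕ) : ℝ) = (n 1 : ℝ) * (1/((n 1 + m : ℕ) : ℝ)) := by ring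
        _ ≤ _ := this
      · intro k hk
        simp only [Finset.mem_Ioc] at hk
        apply one_div_le_one_div_of_le
        · have : 0 < k := by omega
          exact_mod_cast this
        · have h2 : k ≤ n 1 + m := by omega
          exact_mod_cast h2
    rw [h1, Finset.sum_insert hnot, hshift2]
    rw [Finset.sum_insert hnot, shift_sum_nat n 1 B, ← hm, htot]
    rw [hsplit, add_comm (∑ k ∈ Finset.Icc 1 m, (1:ℝ)/k)]
    exact add_le_add hkey (by simpa using hIH)

theorem elimination_weight_inequality {ι : Type*} [DecidableEq ι]
    (T : Finset ι) (B : ℕ) (hB : 1 ≤ B)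
    (O : ℕ → Finset ι)
    (hOnonempty : ∀ s ∈ Finset.Icc 1 B, (O s).Nonempty)
    (hOdisj : ∀ s ∈ Finset.Icc 1 B, ∀ t ∈ Finset.Icc 1 B, s ≠ t → Disjoint (O s) (O t))
    (hOunion : T = (Finset.Icc 1 B).biUnion O)
    (S : ℕ → Finset ι)
    (hS : ∀ s, S s = (Finset.Icc s B).biUnion O)
    (w : ι → ℝ) (hw : ∀ j ∈ T, 0 ≤ w j)
    (N : ℕ) (hN : N = T.card) :
    (∑ s ∈ Finset.Icc 1 B,
        ((O s).card : ℝ) / (S s).card * ∑ t ∈ Finset.Icc 1 s, ∑ j ∈ O t, w j)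
      ≤ min (∑ k ∈ Finset.Icc 1 N, (1 : ℝ) / k) (B : ℝ) * ∑ j ∈ T, w j
    ∧ (∑ s ∈ Finset.Icc 1 B, ((O s).card : ℝ) / (S s).card)
      ≤ ∑ k ∈ Finset.Icc 1 N, (1 : ℝ) / k := by
  have hScard : ∀ s ∈ Finset.Icc 1 B, (S s).card = ∑ t ∈ Finset.Icc s B, (O t).card := by
    intro s hs
    simp only [Finset.mem_Icc] at hs
    rw [hS s]
    apply Finset.card_biUnion
    intro t ht t' ht' hne
    simp only [Finset.mem_coe, Finset.mem_Icc] at ht ht'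
    exact hOdisj t (by simp only [Finset.mem_Icc]; omega) t'
      (by simp only [Finset.mem_Icc]; omega) hne
  have hNcard : N = ∑ t ∈ Finset.Icc 1 B, (O t).card := by
    rw [hN, hOunion]
    apply Finset.card_biUnion
    intro t ht t' ht' hne
    exact hOdisj t ht t' ht' hne
  have hratio_eq : (∑ s ∈ Finset.Icc 1 B, ((O s).card : ℝ) / (S s).card)
      = ∑ s ∈ Finset.Icc 1 B,
          ((O s).card : ℝ) / ((∑ t ∈ Finset.Icc s B, (O t).card : ℕ) : ℝ) := by
    apply Finset.sum_congr rfl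
    intro s hs
    rw [hScard s hs]
  have part2 : (∑ s ∈ Finset.Icc 1 B, ((O s).card : ℝ) / (S s).card)
      ≤ ∑ k ∈ Finset.Icc 1 N, (1 : ℝ) / k := by
    rw [hratio_eq, hNcard]
    exact harm B (fun s => (O s).card) (fun s hs => Finset.card_pos.mpr (hOnonempty s hs))
  refine ⟨?_, part2⟩
  have hOsubT : ∀ t ∈ Finset.Icc 1 B, O t ⊆ T := by
    intro t ht
    rw [hOunion]
    exact Finset.subset_biUnion_of_mem O ht
  have hWsum : (∑ j ∈ T, w j) = ∑ t ∈ Finset.Icc 1 B, ∑ j ∈ O t, w j := by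
    rw [hOunion]
    apply Finset.sum_biUnion
    intro a ha b hb hne
    exact hOdisj a ha b hb hne
  have hW0 : 0 ≤ ∑ j ∈ T, w j := Finset.sum_nonneg hw
  have hinner : ∀ s ∈ Finset.Icc 1 B,
      (∑ t ∈ Finset.Icc 1 s, ∑ j ∈ O t, w j) ≤ ∑ j ∈ T, w j := by
    intro s hs
    simp only [Finset.mem_Icc] at hs
    rw [hWsum]
    apply Finset.sum_le_sum_of_subset_of_nonneg
    · exact Finset.Icc_subset_Icc_right hs.2
    · intro t ht _
      exact Finset.sum_nonneg (fun j hj => hw j (hOsubT t ht hj))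
  have hrat0 : ∀ s, (0:ℝ) ≤ ((O s).card : ℝ) / (S s).card := by
    intro s; positivity
  have hrat1 : ∀ s ∈ Finset.Icc 1 B, ((O s).card : ℝ) / (S s).card ≤ 1 := by
    intro s hs
    have hsub : O s ⊆ S s := by
      rw [hS s]
      apply Finset.subset_biUnion_of_mem O
      simp only [Finset.mem_Icc] at hs ⊢; omega
    have hpos : 0 < (S s).card := Finset.card_pos.mpr ((hOnonempty s hs).mono hsub)
    rw [div_le_one (by exact_mod_cast hpos)]
    exact_mod_cast Finset.card_le_card hsub
  have hsumB : (∑ s ∈ Finset.Icc 1 B, ((O s).card : ℝ) / (S s).card) ≤ (B : ℝ) := by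
    calc ∑ s ∈ Finset.Icc 1 B, ((O s).card : ℝ) / (S s).card
        ≤ ∑ s ∈ Finset.Icc 1 B, (1:ℝ) := Finset.sum_le_sum hrat1
      _ = (B : ℝ) := by simp [Nat.card_Icc]
  calc (∑ s ∈ Finset.Icc 1 B,
        ((O s).card : ℝ) / (S s).card * ∑ t ∈ Finset.Icc 1 s, ∑ j ∈ O t, w j)
      ≤ ∑ s ∈ Finset.Icc 1 B, ((O s).card : ℝ) / (S s).card * ∑ j ∈ T, w j := by
        apply Finset.sum_le_sum
        intro s hs
        exact mul_le_mul_of_nonneg_left (hinner s hs) (hrat0 s)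
    _ = (∑ s ∈ Finset.Icc 1 B, ((O s).card : ℝ) / (S s).card) * ∑ j ∈ T, w j := by
        rw [Finset.sum_mul]
    _ ≤ min (∑ k ∈ Finset.Icc 1 N, (1 : ℝ) / k) (B : ℝ) * ∑ j ∈ T, w j :=
        mul_le_mul_of_nonneg_right (le_min part2 hsumB) hW0
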